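/- arXiv:1409.0376 — 4 statements merged into one kernel-verified Lean document; each statement's English description precedes it below -/
import Mathlib

section
/- Let ε > 0, δ > 0 and let g : ℝ → ℕ → ℝ be strictly dissipative with rate δ uniformly in n. Fix n ∈ ℕ and x*_n ∈ ℝ with g(x*_n, n) = 0. If x : ℝ → ℝ is differentiable at every t ≥ 0 and satisfies x'(t) = (1/ε)·g(x(t), n) for all t ≥ 0, then for all t ≥ 0 one has |x(t) − x*_n| ≤ |x(0) − x*_n| · exp(−δ·t/ε). (Proposition 'cv:fast': the fast subsystem converges exponentially fast to its quasi-equilibrium, uniformly over the frozen environment n.) -/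
/-- Proposition (cv:fast): the fast subsystem converges exponentially fast to its
quasi-equilibrium, uniformly over the frozen environment `n`. -/
theorem fast_subsystem_exponential_convergence
    (ε δ : ℝ) (hε : 0 < ε) (hδ : 0 < δ) (g : ℝ → ℕ → ℝ)
    (hdiss : ∀ (x₁ x₂ : ℝ) (n : ℕ),
      (x₁ - x₂) * (g x₁ n - g x₂ n) ≤ -δ * (x₁ - x₂) ^ 2)
    (n : ℕ) (xstar : ℝ) (hxstar : g xstar n = 0)
    (x : ℝ → ℝ)
    (hode : ∀ t : ℝ, 0 ≤ t → HasDerivAt x ((1 / ε) * g (x t) n) t) :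
    ∀ t : ℝ, 0 ≤ t → |x t - xstar| ≤ |x 0 - xstar| * Real.exp (-δ * t / ε) := by
  set c : ℝ := 2 * δ / ε with hc
  have hcpos : 0 < c := by positivity
  set h : ℝ → ℝ := fun t => (x t - xstar) ^ 2 * Real.exp (c * t) with hh
  -- derivative of h at points t ≥ 0
  have hderiv : ∀ t : ℝ, 0 ≤ t → HasDerivAt h
      (2 * (x t - xstar) * ((1 / ε) * g (x t) n) * Real.exp (c * t)
        + (x t - xstar) ^ 2 * (c * Real.exp (c * t))) t := by
    intro t ht
    have h1 : HasDerivAt (fun t => (x t - xstar) ^ 2)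
        (2 * (x t - xstar) * ((1 / ε) * g (x t) n)) t := by
      have := ((hode t ht).sub_const xstar).fun_pow 2
      simpa [mul_comm, mul_assoc, mul_left_comm] using this
    have h2 : HasDerivAt (fun t => Real.exp (c * t)) (c * Real.exp (c * t)) t := by
      have := ((hasDerivAt_id t).const_mul c).exp
      simpa [mul_comm] using this
    exact h1.mul h2
  have hderiv_nonpos : ∀ t : ℝ, 0 ≤ t →
      2 * (x t - xstar) * ((1 / ε) * g (x t) n) * Real.exp (c * t)
        + (x t - xstar) ^ 2 * (c * Real.exp (c * t)) ≤ 0 := by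
    intro t ht
    have hd := hdiss (x t) xstar n
    rw [hxstar, sub_zero] at hd
    have hE : 0 < Real.exp (c * t) := Real.exp_pos _
    have key : (x t - xstar) * g (x t) n + δ * (x t - xstar) ^ 2 ≤ 0 := by linarith
    have : 2 * (x t - xstar) * ((1 / ε) * g (x t) n)
        + (x t - xstar) ^ 2 * c
        = (2 / ε) * ((x t - xstar) * g (x t) n + δ * (x t - xstar) ^ 2) := by
      rw [hc]; field_simp
    nlinarith [mul_nonneg (le_of_lt hE)
      (neg_nonneg.mpr (mul_nonpos_of_nonneg_of_nonpos (by positivity : (0:ℝ) ≤ 2/ε) key))]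
  -- h is antitone on [0, ∞)
  have hanti : AntitoneOn h (Set.Ici 0) := by
    apply antitoneOn_of_deriv_nonpos (convex_Ici 0)
    · exact fun t ht => ((hderiv t ht).continuousAt).continuousWithinAt
    · intro t ht
      rw [interior_Ici] at ht
      exact ((hderiv t (le_of_lt ht)).differentiableAt).differentiableWithinAt
    · intro t ht
      rw [interior_Ici] at ht
      rw [(hderiv t (le_of_lt ht)).deriv]
      exact hderiv_nonpos t (le_of_lt ht)
  intro t ht
  have hle : h t ≤ h 0 := hanti (Set.self_mem_Ici) ht ht
  simp only [hh, mul_zero, Real.exp_zero, mul_one] at hle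
  -- square both sides
  have hsq : |x t - xstar| ^ 2 ≤ (|x 0 - xstar| * Real.exp (-δ * t / ε)) ^ 2 := by
    have hE : Real.exp (-δ * t / ε) ^ 2 = Real.exp (-(c * t)) := by
      rw [sq, ← Real.exp_add]
      congr 1
      rw [hc]; field_simp; ring
    rw [mul_pow, hE, sq_abs, sq_abs]
    have hEpos : 0 < Real.exp (c * t) := Real.exp_pos _
    rw [Real.exp_neg, ← div_eq_mul_inv, le_div_iff₀ hEpos]
    exact hle
  have := abs_nonneg (x t - xstar)
  nlinarith [abs_nonneg (x 0 - xstar), Real.exp_pos (-δ * t / ε),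
    mul_nonneg (abs_nonneg (x 0 - xstar)) (le_of_lt (Real.exp_pos (-δ * t / ε)))]
end

section
/- Let ε > 0, δ > 0 and let g : ℝ → ℕ → ℝ be strictly dissipative with rate δ uniformly in n, with g(0, m) > 0 for every m ∈ ℕ and g(0, m) ≤ G for every m ∈ ℕ, where G > 0. Let ν : [0,∞) → ℕ be an arbitrary function and let x : ℝ → ℝ be differentiable at every t ≥ 0 with x'(t) = (1/ε)·g(x(t), ν(t)) for all t ≥ 0 and x(0) > 0. Then for all t ≥ 0, x(t) ≤ (x(0) + G/δ)·exp(−δ·t/ε) + G/δ. (Deterministic, trajectorywise form of the appendix Lemma bounding the fast component x^ε.) -/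
/-- Deterministic, trajectorywise form of the appendix Lemma bounding the fast
component: `x t ≤ (x 0 + G/δ)·exp(-δ t/ε) + G/δ`. -/
theorem fast_component_bound
    (ε δ G : ℝ) (hε : 0 < ε) (hδ : 0 < δ) (hG : 0 < G) (g : ℝ → ℕ → ℝ)
    (hdiss : ∀ (x₁ x₂ : ℝ) (n : ℕ),
      (x₁ - x₂) * (g x₁ n - g x₂ n) ≤ -δ * (x₁ - x₂) ^ 2)
    (hg0pos : ∀ m : ℕ, 0 < g 0 m)
    (hg0le : ∀ m : ℕ, g 0 m ≤ G)
    (ν : ℝ → ℕ) (x : ℝ → ℝ)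
    (hode : ∀ t : ℝ, 0 ≤ t → HasDerivAt x ((1 / ε) * g (x t) (ν t)) t)
    (h0 : 0 < x 0) :
    ∀ t : ℝ, 0 ≤ t →
      x t ≤ (x 0 + G / δ) * Real.exp (-δ * t / ε) + G / δ := by
  have hcont : ∀ t : ℝ, 0 ≤ t → ContinuousAt x t := fun t ht => (hode t ht).continuousAt
  -- positivity of x on [0, ∞)
  have hpos : ∀ t : ℝ, 0 ≤ t → 0 < x t := by
    intro t₀ ht₀
    by_contra hcon
    push_neg at hcon
    set S : Set ℝ := Set.Icc 0 t₀ ∩ x ⁻¹' Set.Iic 0 with hSdef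
    have hSclosed : IsClosed S := by
      have hxc : ContinuousOn x (Set.Icc 0 t₀) :=
        fun t ht => (hcont t ht.1).continuousWithinAt
      exact hxc.preimage_isClosed_of_isClosed isClosed_Icc isClosed_Iic
    have hne : S.Nonempty := ⟨t₀, ⟨⟨ht₀, le_rfl⟩, hcon⟩⟩
    have hbdd : BddBelow S := ⟨0, fun t ht => ht.1.1⟩
    set s := sInf S with hsdef
    have hsmem : s ∈ S := hSclosed.csInf_mem hne hbdd
    have hs0 : 0 ≤ s := hsmem.1.1
    have hxs_le : x s ≤ 0 := hsmem.2
    have hspos : 0 < s := by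
      rcases eq_or_lt_of_le hs0 with h | h
      · exact absurd (h ▸ hxs_le) (not_le.mpr h0)
      · exact h
    have hlt : ∀ t : ℝ, 0 ≤ t → t < s → 0 < x t := by
      intro t ht hts
      by_contra h'
      push_neg at h'
      have htS : t ∈ S := ⟨⟨ht, hts.le.trans hsmem.1.2⟩, h'⟩
      exact absurd (csInf_le hbdd htS) (not_le.mpr hts)
    -- x s = 0
    have hxs0 : x s = 0 := by
      refine le_antisymm hxs_le ?_
      refine ge_of_tendsto ((hcont s hs0).continuousWithinAt :
        Filter.Tendsto x (nhdsWithin s (Set.Iio s)) (nhds (x s))) ?_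
      filter_upwards [Ioo_mem_nhdsLT_of_mem (Set.mem_Ioc.mpr ⟨hspos, le_rfl⟩)] with t ht
      exact (hlt t ht.1.le ht.2).le
    -- derivative at s is positive
    have hd := hode s hs0
    have hdpos : 0 < (1 / ε) * g (x s) (ν s) := by
      rw [hxs0]
      exact mul_pos (by positivity) (hg0pos (ν s))
    -- but left slopes are nonpositive
    have hslope : Filter.Tendsto (slope x s) (nhdsWithin s {s}ᶜ)
        (nhds ((1 / ε) * g (x s) (ν s))) := hasDerivAt_iff_tendsto_slope.mp hd
    have hslope' : Filter.Tendsto (slope x s) (nhdsWithin s (Set.Iio s))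
        (nhds ((1 / ε) * g (x s) (ν s))) :=
      hslope.mono_left (nhdsWithin_mono s (fun t ht => ne_of_lt ht))
    have hle : (1 / ε) * g (x s) (ν s) ≤ 0 := by
      refine le_of_tendsto hslope' ?_
      filter_upwards [Ioo_mem_nhdsLT_of_mem (Set.mem_Ioc.mpr ⟨hspos, le_rfl⟩)] with t ht
      have : slope x s t = x t / (t - s) := by
        rw [slope_def_field, hxs0, sub_zero]
      rw [this]
      exact div_nonpos_of_nonneg_of_nonpos (hlt t ht.1.le ht.2).le (by linarith [ht.2])
    linarith
  -- key differential inequality bound on g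
  have hgbound : ∀ t : ℝ, 0 ≤ t → ∀ n : ℕ, g (x t) n ≤ G - δ * x t := by
    intro t ht n
    have h1 := hdiss (x t) 0 n
    simp only [sub_zero] at h1
    have hx := hpos t ht
    nlinarith [hg0le n, mul_pos hx hx]
  -- define y and show it is antitone
  set c : ℝ := G / δ with hc
  set k : ℝ := δ / ε with hk
  have hcpos : 0 < c := div_pos hG hδ
  have hkpos : 0 < k := div_pos hδ hε
  set y : ℝ → ℝ := fun t => (x t - c) * Real.exp (k * t) with hy
  have hyderiv : ∀ t : ℝ, 0 ≤ t → HasDerivAt y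
      (((1 / ε) * g (x t) (ν t) + (x t - c) * k) * Real.exp (k * t)) t := by
    intro t ht
    have h := ((hode t ht).sub_const c).fun_mul (((hasDerivAt_id t).const_mul k).exp)
    simp only [id_eq] at h
    refine h.congr_deriv ?_
    ring
  have hyderiv_nonpos : ∀ t : ℝ, 0 ≤ t →
      ((1 / ε) * g (x t) (ν t) + (x t - c) * k) * Real.exp (k * t) ≤ 0 := by
    intro t ht
    have hE : 0 < Real.exp (k * t) := Real.exp_pos _
    have hgb := hgbound t ht (ν t)
    have h1 : (1 / ε) * g (x t) (ν t) ≤ (1 / ε) * (G - δ * x t) :=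
      mul_le_mul_of_nonneg_left hgb (by positivity)
    have e1 : (1 / ε) * (G - δ * x t) + (x t - c) * k = 0 := by
      rw [hc, hk]
      field_simp
      ring
    have key : (1 / ε) * g (x t) (ν t) + (x t - c) * k ≤ 0 := by linarith
    exact mul_nonpos_of_nonpos_of_nonneg key hE.le
  have hanti : AntitoneOn y (Set.Ici (0 : ℝ)) := by
    apply antitoneOn_of_deriv_nonpos (convex_Ici 0)
    · exact fun t ht => ((hyderiv t ht).continuousAt).continuousWithinAt
    · intro t ht
      rw [interior_Ici] at ht
      exact (hyderiv t (le_of_lt ht)).differentiableAt.differentiableWithinAt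
    · intro t ht
      rw [interior_Ici] at ht
      rw [(hyderiv t ht.le).deriv]
      exact hyderiv_nonpos t ht.le
  -- conclude
  intro t ht
  have hyt : y t ≤ y 0 := hanti (Set.mem_Ici.mpr le_rfl) (Set.mem_Ici.mpr ht) ht
  have hy0 : y 0 = x 0 - c := by simp [hy]
  have hE : 0 < Real.exp (k * t) := Real.exp_pos _
  have hEeq : Real.exp (-δ * t / ε) = (Real.exp (k * t))⁻¹ := by
    rw [← Real.exp_neg]
    congr 1
    rw [hk]; ring
  rw [hEeq]
  have hineq : (x t - c) * Real.exp (k * t) ≤ x 0 - c := hy0 ▸ hyt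
  have h2 : x t - c ≤ (x 0 - c) * (Real.exp (k * t))⁻¹ := by
    rw [← div_eq_mul_inv, le_div_iff₀ hE]
    exact hineq
  have hinv : 0 < (Real.exp (k * t))⁻¹ := inv_pos.mpr hE
  nlinarith [h2, hinv, hcpos]
end

section
/- Let ε > 0, δ > 0, let g : ℝ → ℕ → ℝ be strictly dissipative with rate δ uniformly in n, and let b : ℝ → ℕ → ℝ satisfy the Lipschitz growth condition: there are constants c₁ ≥ 0 and c₂, c₃ > 0 with |b(x, m) − b(y, m)| ≤ c₁·(1 + c₂·m + c₃·m²)·|x − y| for all x, y ∈ ℝ and m ∈ ℕ. Fix m ∈ ℕ and x*_m ∈ ℝ with g(x*_m, m) = 0, fix t₀ < t₁, and let x : ℝ → ℝ be differentiable at every s ∈ [t₀, t₁) with x'(s) = (1/ε)·g(x(s), m) for all s ∈ [t₀, t₁). Then for every s ∈ [t₀, t₁), |b(x(s), m) − b(x*_m, m)| ≤ c₁·(1 + c₂·m + c₃·m²)·|x(t₀) − x*_m|·exp(−δ·(s − t₀)/ε). (Pathwise estimate on an inter-jump interval, the key deterministic step in the appendix Lemma controlling the averaging error.) -/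
/-- Pathwise estimate on an inter-jump interval: the key deterministic step in the
appendix Lemma controlling the averaging error. -/
theorem interjump_rate_estimate
    (ε δ : ℝ) (hε : 0 < ε) (hδ : 0 < δ)
    (g : ℝ → ℕ → ℝ) (b : ℝ → ℕ → ℝ)
    (hdiss : ∀ (x₁ x₂ : ℝ) (n : ℕ),
      (x₁ - x₂) * (g x₁ n - g x₂ n) ≤ -δ * (x₁ - x₂) ^ 2)
    (c₁ c₂ c₃ : ℝ) (hc₁ : 0 ≤ c₁) (hc₂ : 0 < c₂) (hc₃ : 0 < c₃)
    (hlip : ∀ (x y : ℝ) (m : ℕ),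
      |b x m - b y m| ≤ c₁ * (1 + c₂ * (m : ℝ) + c₃ * (m : ℝ) ^ 2) * |x - y|)
    (m : ℕ) (xstar : ℝ) (hxstar : g xstar m = 0)
    (t₀ t₁ : ℝ) (ht : t₀ < t₁)
    (x : ℝ → ℝ)
    (hode : ∀ s ∈ Set.Ico t₀ t₁, HasDerivAt x ((1 / ε) * g (x s) m) s) :
    ∀ s ∈ Set.Ico t₀ t₁,
      |b (x s) m - b xstar m| ≤
        c₁ * (1 + c₂ * (m : ℝ) + c₃ * (m : ℝ) ^ 2) * |x t₀ - xstar| *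
          Real.exp (-δ * (s - t₀) / ε) := by
  intro s hs
  obtain ⟨hs₀, hs₁⟩ := hs
  -- define Lyapunov function
  set F : ℝ → ℝ := fun u => (x u - xstar) ^ 2 * Real.exp (2 * δ * (u - t₀) / ε) with hF
  -- F has nonpositive derivative on Ico t₀ t₁
  have hFderiv : ∀ u ∈ Set.Ico t₀ t₁, HasDerivAt F
      ((2 * (x u - xstar) * ((1 / ε) * g (x u) m)) * Real.exp (2 * δ * (u - t₀) / ε)
        + (x u - xstar) ^ 2 * (Real.exp (2 * δ * (u - t₀) / ε) * (2 * δ / ε))) u := by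
    intro u hu
    have h1 : HasDerivAt (fun u => (x u - xstar) ^ 2)
        (2 * (x u - xstar) * ((1 / ε) * g (x u) m)) u := by
      have := ((hode u hu).sub_const xstar).pow 2
      simpa [Pi.pow_def, mul_comm, mul_assoc, mul_left_comm] using this
    have h2 : HasDerivAt (fun u => Real.exp (2 * δ * (u - t₀) / ε))
        (Real.exp (2 * δ * (u - t₀) / ε) * (2 * δ / ε)) u := by
      have hlin : HasDerivAt (fun u : ℝ => 2 * δ * (u - t₀) / ε) (2 * δ / ε) u := by
        have : HasDerivAt (fun u : ℝ => 2 * δ * (u - t₀) / ε) (2 * δ * 1 / ε) u :=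
          (((hasDerivAt_id u).sub_const t₀).const_mul (2 * δ)).div_const ε
        simpa using this
      simpa [Function.comp_def, mul_comm] using (Real.hasDerivAt_exp _).comp u hlin
    simpa [hF, Pi.mul_def] using h1.mul h2
  have hFnonpos : ∀ u ∈ Set.Ioo t₀ s, deriv F u ≤ 0 := by
    intro u hu
    have hu' : u ∈ Set.Ico t₀ t₁ := ⟨le_of_lt hu.1, lt_trans hu.2 hs₁⟩
    rw [(hFderiv u hu').deriv]
    have hd : (x u - xstar) * (g (x u) m) ≤ -δ * (x u - xstar) ^ 2 := by
      simpa [hxstar] using hdiss (x u) xstar m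
    have hexp : 0 < Real.exp (2 * δ * (u - t₀) / ε) := Real.exp_pos _
    have key : 2 * (x u - xstar) * ((1 / ε) * g (x u) m)
        + (x u - xstar) ^ 2 * (2 * δ / ε) ≤ 0 := by
      have h2ε : (0:ℝ) < 2 / ε := by positivity
      have h := mul_le_mul_of_nonneg_left hd (le_of_lt h2ε)
      have e1 : 2 * (x u - xstar) * ((1 / ε) * g (x u) m)
          = 2 / ε * ((x u - xstar) * g (x u) m) := by ring
      have e2 : (x u - xstar) ^ 2 * (2 * δ / ε)
          = -(2 / ε * (-δ * (x u - xstar) ^ 2)) := by ring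
      rw [e1, e2]
      linarith
    nlinarith [key, hexp, mul_le_mul_of_nonneg_right key (le_of_lt hexp)]
  -- F is antitone on [t₀, s], hence F s ≤ F t₀
  have hcont : ContinuousOn F (Set.Icc t₀ s) := by
    intro u hu
    have hu' : u ∈ Set.Ico t₀ t₁ := ⟨hu.1, lt_of_le_of_lt hu.2 hs₁⟩
    exact ((hFderiv u hu').continuousAt).continuousWithinAt
  have hdiff : ∀ u ∈ Set.Ioo t₀ s, DifferentiableAt ℝ F u := by
    intro u hu
    exact (hFderiv u ⟨le_of_lt hu.1, lt_trans hu.2 hs₁⟩).differentiableAt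
  have hanti : AntitoneOn F (Set.Icc t₀ s) := by
    have : interior (Set.Icc t₀ s) = Set.Ioo t₀ s := interior_Icc
    exact antitoneOn_of_deriv_nonpos (convex_Icc t₀ s) hcont
      (fun u hu => (hdiff u (this ▸ hu)).differentiableWithinAt) (fun u hu => hFnonpos u (this ▸ hu))
  have hFs : F s ≤ F t₀ := hanti (Set.left_mem_Icc.mpr hs₀) (Set.right_mem_Icc.mpr hs₀) hs₀
  -- translate into the exponential bound on |x s - xstar|
  have hsq : (x s - xstar) ^ 2 ≤ (x t₀ - xstar) ^ 2 * Real.exp (-2 * δ * (s - t₀) / ε) := by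
    have hFt₀ : F t₀ = (x t₀ - xstar) ^ 2 := by simp [hF]
    have hFs' : (x s - xstar) ^ 2 * Real.exp (2 * δ * (s - t₀) / ε) ≤ (x t₀ - xstar) ^ 2 := by
      rw [← hFt₀]; exact hFs
    have hexp : 0 < Real.exp (2 * δ * (s - t₀) / ε) := Real.exp_pos _
    have : (x s - xstar) ^ 2 ≤ (x t₀ - xstar) ^ 2 / Real.exp (2 * δ * (s - t₀) / ε) :=
      (le_div_iff₀ hexp).mpr hFs'
    calc (x s - xstar) ^ 2 ≤ (x t₀ - xstar) ^ 2 / Real.exp (2 * δ * (s - t₀) / ε) := this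
      _ = (x t₀ - xstar) ^ 2 * Real.exp (-2 * δ * (s - t₀) / ε) := by
          rw [div_eq_mul_inv, ← Real.exp_neg]; ring_nf
  have habs : |x s - xstar| ≤ |x t₀ - xstar| * Real.exp (-δ * (s - t₀) / ε) := by
    have hrhs : 0 ≤ |x t₀ - xstar| * Real.exp (-δ * (s - t₀) / ε) := by positivity
    have hsq' : (x s - xstar) ^ 2 ≤ (|x t₀ - xstar| * Real.exp (-δ * (s - t₀) / ε)) ^ 2 := by
      have : (|x t₀ - xstar| * Real.exp (-δ * (s - t₀) / ε)) ^ 2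
          = (x t₀ - xstar) ^ 2 * Real.exp (-2 * δ * (s - t₀) / ε) := by
        rw [mul_pow, sq_abs]
        rw [show Real.exp (-δ * (s - t₀) / ε) ^ 2 = Real.exp (-2 * δ * (s - t₀) / ε) by
          rw [sq, ← Real.exp_add]; congr 1; ring]
      rw [this]; exact hsq
    have := Real.sqrt_le_sqrt hsq'
    rwa [Real.sqrt_sq_eq_abs, Real.sqrt_sq hrhs] at this
  calc |b (x s) m - b xstar m|
      ≤ c₁ * (1 + c₂ * (m : ℝ) + c₃ * (m : ℝ) ^ 2) * |x s - xstar| := hlip _ _ _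
    _ ≤ c₁ * (1 + c₂ * (m : ℝ) + c₃ * (m : ℝ) ^ 2) *
        (|x t₀ - xstar| * Real.exp (-δ * (s - t₀) / ε)) := by
        apply mul_le_mul_of_nonneg_left habs
        positivity
    _ = c₁ * (1 + c₂ * (m : ℝ) + c₃ * (m : ℝ) ^ 2) * |x t₀ - xstar| *
        Real.exp (-δ * (s - t₀) / ε) := by ring
end

section
/- Let μ(x) = 0.15·x/(1 + x) and g(x, n) = 0.1·(7 − x) − 0.075·n·x/(1 + x) for x > −1 and n ∈ ℕ, let D = 0.1, and for each k ≥ 1 let x*_k > 0 satisfy g(x*_k, k) = 0. Define ρ_i = ∏_{k=1}^{i} ( D / μ(x*_k) ) for i ≥ 1. Then the series ∑_{i≥1} ρ_i diverges (the sequence of partial sums tends to +∞; equivalently, (ρ_i) is not summable). (Divergence of the series ∑ ρ_i, which by the absorption criterion for birth–death chains shows that the averaged predator process is absorbed at 0 with probability one.) -/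
/-- The Monod consumption function of the numerical example. -/
noncomputable def monod (x : ℝ) : ℝ := 0.15 * x / (1 + x)

/-- The prey drift of the numerical example:
`g(x,n) = 0.1·(7 − x) − 0.075·n·x/(1+x)`. -/
noncomputable def gEx (x : ℝ) (n : ℕ) : ℝ :=
  0.1 * (7 - x) - 0.075 * (n : ℝ) * x / (1 + x)

/-- Divergence of the series `∑ ρ_i`, where
`ρ_i = ∏_{k=1}^{i} (D / μ(x*_k))` with `D = 0.1`: the partial sums tend to `+∞`
and `(ρ_i)` is not summable. By the absorption criterion for birth–death chains
this shows that the averaged predator process is absorbed at `0` with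
probability one. -/
theorem rho_series_diverges
    (xstar : ℕ → ℝ)
    (hpos : ∀ k : ℕ, 1 ≤ k → 0 < xstar k)
    (hzero : ∀ k : ℕ, 1 ≤ k → gEx (xstar k) k = 0)
    (ρ : ℕ → ℝ)
    (hρ : ∀ i : ℕ, ρ i = ∏ k ∈ Finset.Icc 1 i, ((0.1 : ℝ) / monod (xstar k))) :
    Filter.Tendsto (fun N : ℕ => ∑ i ∈ Finset.Icc 1 N, ρ i)
        Filter.atTop Filter.atTop ∧
      ¬ Summable ρ := by
  -- basic facts about each factor
  have hfact : ∀ k : ℕ, 1 ≤ k →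
      0 < monod (xstar k) ∧ (k : ℝ) / 14 ≤ 0.1 / monod (xstar k) := by
    intro k hk
    have hx : 0 < xstar k := hpos k hk
    have h1x : 0 < 1 + xstar k := by linarith
    have hk0 : (0 : ℝ) < (k : ℝ) := by exact_mod_cast hk
    have heq : (0.1 : ℝ) * (7 - xstar k) - 0.075 * (k : ℝ) * xstar k / (1 + xstar k) = 0 := by
      have := hzero k hk; simpa [gEx] using this
    -- x*_k < 7
    have hx7 : xstar k < 7 := by
      have hterm : 0 < 0.075 * (k : ℝ) * xstar k / (1 + xstar k) := by positivity
      nlinarith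
    have hm : 0 < monod (xstar k) := by
      unfold monod; positivity
    refine ⟨hm, ?_⟩
    -- μ(x*_k) = 0.2 (7 − x*_k) / k
    have hmeq : monod (xstar k) = 0.2 * (7 - xstar k) / (k : ℝ) := by
      unfold monod
      field_simp at heq ⊢
      nlinarith [heq]
    have hmle : monod (xstar k) ≤ 1.4 / (k : ℝ) := by
      rw [hmeq, div_le_div_iff₀ hk0 hk0]
      nlinarith
    rw [div_le_div_iff₀ (by norm_num : (0:ℝ) < 14) hm]
    calc (k : ℝ) * monod (xstar k) ≤ (k : ℝ) * (1.4 / (k : ℝ)) := by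
          exact mul_le_mul_of_nonneg_left hmle (le_of_lt hk0)
      _ = 1.4 := by field_simp
      _ = 0.1 * 14 := by norm_num
  -- lower bound L i = i! / 14^i
  set L : ℕ → ℝ := fun i => (Nat.factorial i : ℝ) / 14 ^ i with hL
  have hLle : ∀ i : ℕ, L i ≤ ρ i := by
    intro i
    rw [hρ i]
    have : L i = ∏ k ∈ Finset.Icc 1 i, ((k : ℝ) / 14) := by
      rw [Finset.prod_div_distrib, Finset.prod_const, Nat.card_Icc]
      simp only [hL]
      rw [← Nat.cast_prod, ← Finset.Ico_add_one_right_eq_Icc, Finset.prod_Ico_id_eq_factorial]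
      simp
    rw [this]
    apply Finset.prod_le_prod
    · intro k hk; positivity
    · intro k hk
      exact (hfact k (Finset.mem_Icc.mp hk).1).2
  have hLtop : Filter.Tendsto L Filter.atTop Filter.atTop := by
    have h0 : Filter.Tendsto (fun i : ℕ => (14 : ℝ) ^ i / (Nat.factorial i : ℝ))
        Filter.atTop (nhds 0) := FloorSemiring.tendsto_pow_div_factorial_atTop 14
    have h0' : Filter.Tendsto (fun i : ℕ => (14 : ℝ) ^ i / (Nat.factorial i : ℝ))
        Filter.atTop (nhdsWithin 0 (Set.Ioi 0)) := by
      apply tendsto_nhdsWithin_of_tendsto_nhds_of_eventually_within _ h0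
      filter_upwards with i
      have : (0:ℝ) < Nat.factorial i := by exact_mod_cast Nat.factorial_pos i
      simp only [Set.mem_Ioi]
      positivity
    have := h0'.inv_tendsto_nhdsGT_zero
    refine this.congr fun i => ?_
    simp [hL, inv_div]
  have hρtop : Filter.Tendsto ρ Filter.atTop Filter.atTop :=
    Filter.tendsto_atTop_mono hLle hLtop
  have hρnonneg : ∀ i, 0 ≤ ρ i := by
    intro i
    rw [hρ i]
    apply Finset.prod_nonneg
    intro k hk
    have := (hfact k (Finset.mem_Icc.mp hk).1).1
    positivity
  constructor
  · apply Filter.tendsto_atTop_mono' _ _ hρtop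
    filter_upwards [Filter.eventually_ge_atTop 1] with N hN
    exact Finset.single_le_sum (fun i _ => hρnonneg i) (Finset.mem_Icc.mpr ⟨hN, le_refl N⟩)
  · intro hs
    have h0 := hs.tendsto_atTop_zero
    have h1 : ∀ᶠ i in Filter.atTop, (1:ℝ) ≤ ρ i := hρtop.eventually_ge_atTop 1
    have h2 : ∀ᶠ i in Filter.atTop, ρ i < 1 := by
      have := h0.eventually (gt_mem_nhds (by norm_num : (0:ℝ) < 1))
      filter_upwards [this] with i hi using hi
    obtain ⟨i, hi1, hi2⟩ := (h1.and h2).exists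
    linarith
end
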